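/- Let Ω be a set and C a collection of subsets of Ω such that Ω is a countable union of members of C (i.e., Ω ∈ C_σ) and such that for all A, B ∈ C the difference A \ B belongs to C_σδ (the collection of countable intersections of countable unions of members of C). Let F = σ(C). Then for every ω ∈ Ω, the atom of F containing ω equals the intersection of all members of C containing ω: A_F(ω) = A_C(ω). -/
import Mathlib


open MeasureTheory Classical

variable {Ω : Type*}

/-- The intersection of all members of `C` containing `ω`, with the convention
that it is `∅` when no member of `C` contains `ω`. -/
noncomputable def atomOf (C : Set (Set Ω)) (ω : Ω) : Set Ω :=
  if ∃ B ∈ C, ω ∈ B then ⋂₀ {B | B ∈ C ∧ ω ∈ B} else ∅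

/-- `C_σ` : the collection of all countable unions of members of `C`. -/
def sigmaUnions (C : Set (Set Ω)) : Set (Set Ω) :=
  {A | ∃ f : ℕ → Set Ω, (∀ n, f n ∈ C) ∧ A = ⋃ n, f n}

/-- `C_σδ` : the collection of all countable intersections of members of `C_σ`. -/
def sigmaDelta (C : Set (Set Ω)) : Set (Set Ω) :=
  {A | ∃ f : ℕ → Set Ω, (∀ n, f n ∈ sigmaUnions C) ∧ A = ⋂ n, f n}

/-- A κ class: closed under countable (nonempty) unions and intersections. -/
def IsKappaClass (K : Set (Set Ω)) : Prop :=
  (∀ f : ℕ → Set Ω, (∀ n, f n ∈ K) → (⋃ n, f n) ∈ K) ∧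
  (∀ f : ℕ → Set Ω, (∀ n, f n ∈ K) → (⋂ n, f n) ∈ K)

/-- `κ(C)` : the smallest κ class containing `C`. -/
def kappa (C : Set (Set Ω)) : Set (Set Ω) :=
  ⋂₀ {K | IsKappaClass K ∧ C ⊆ K}

/-- `σ(C)` viewed as the collection of its measurable sets. -/
def sigmaSets (C : Set (Set Ω)) : Set (Set Ω) :=
  {s | MeasurableSet[MeasurableSpace.generateFrom C] s}

section Aux
variable {Ω : Type*}

lemma my_subset_kappa (C : Set (Set Ω)) : C ⊆ kappa C :=
  fun _ hA _ hK => hK.2 hA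

lemma my_isKappaClass_kappa (C : Set (Set Ω)) : IsKappaClass (kappa C) := by
  constructor
  · intro f hf K hK
    exact hK.1.1 f (fun n => hf n K hK)
  · intro f hf K hK
    exact hK.1.2 f (fun n => hf n K hK)

lemma my_sigmaUnions_subset_kappa (C : Set (Set Ω)) : sigmaUnions C ⊆ kappa C := by
  rintro A ⟨f, hf, rfl⟩
  exact (my_isKappaClass_kappa C).1 f (fun n => my_subset_kappa C (hf n))

lemma my_sigmaDelta_subset_kappa (C : Set (Set Ω)) : sigmaDelta C ⊆ kappa C := by
  rintro A ⟨f, hf, rfl⟩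
  exact (my_isKappaClass_kappa C).2 f (fun n => my_sigmaUnions_subset_kappa C (hf n))

lemma my_sigmaSets_subset_kappa (C : Set (Set Ω))
    (hΩ : (Set.univ : Set Ω) ∈ sigmaUnions C)
    (hdiff : ∀ A ∈ C, ∀ B ∈ C, A \ B ∈ sigmaDelta C) :
    sigmaSets C ⊆ kappa C := by
  obtain ⟨g, hg, hgu⟩ := hΩ
  intro s hs
  have key : s ∈ kappa C ∧ sᶜ ∈ kappa C := by
    refine MeasurableSpace.generateFrom_induction C
      (p := fun t _ => t ∈ kappa C ∧ tᶜ ∈ kappa C) ?_ ?_ ?_ ?_ s hs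
    · intro t ht _
      refine ⟨my_subset_kappa C ht, ?_⟩
      have : tᶜ = ⋃ n, g n \ t := by
        ext x
        simp only [Set.mem_compl_iff, Set.mem_iUnion, Set.mem_diff]
        constructor
        · intro hx
          have : x ∈ ⋃ n, g n := hgu ▸ Set.mem_univ x
          obtain ⟨n, hn⟩ := Set.mem_iUnion.mp this
          exact ⟨n, hn, hx⟩
        · rintro ⟨n, _, hx⟩; exact hx
      rw [this]
      exact (my_isKappaClass_kappa C).1 _
        (fun n => my_sigmaDelta_subset_kappa C (hdiff _ (hg n) _ ht))
    · constructor
      · have hC : ∃ A, A ∈ C := ⟨g 0, hg 0⟩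
        obtain ⟨A, hA⟩ := hC
        have : (∅ : Set Ω) = A \ A := by simp
        rw [this]
        exact my_sigmaDelta_subset_kappa C (hdiff _ hA _ hA)
      · rw [Set.compl_empty]
        exact my_sigmaUnions_subset_kappa C ⟨g, hg, hgu⟩
    · intro t _ ht
      exact ⟨ht.2, by rw [compl_compl]; exact ht.1⟩
    · intro f _ hf
      refine ⟨(my_isKappaClass_kappa C).1 f (fun n => (hf n).1), ?_⟩
      rw [Set.compl_iUnion]
      exact (my_isKappaClass_kappa C).2 _ (fun n => (hf n).2)
  exact key.1

lemma my_atom_subset (C : Set (Set Ω)) (ω : Ω) {S : Set Ω} (hS : S ∈ kappa C)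
    (hω : ω ∈ S) : ⋂₀ {B | B ∈ C ∧ ω ∈ B} ⊆ S := by
  set A := ⋂₀ {B | B ∈ C ∧ ω ∈ B} with hA
  have : S ∈ {T : Set Ω | ω ∈ T → A ⊆ T} := by
    refine hS _ ⟨⟨?_, ?_⟩, ?_⟩
    · intro f hf hωf
      obtain ⟨n, hn⟩ := Set.mem_iUnion.mp hωf
      exact (hf n hn).trans (Set.subset_iUnion f n)
    · intro f hf hωf
      exact Set.subset_iInter (fun n => hf n (Set.mem_iInter.mp hωf n))
    · intro B hB hωB
      exact Set.sInter_subset_of_mem ⟨hB, hωB⟩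
  exact this hω

end Aux

theorem atom_eq_of_diff_mem_sigmaDelta (C : Set (Set Ω))
    (hΩ : (Set.univ : Set Ω) ∈ sigmaUnions C)
    (hdiff : ∀ A ∈ C, ∀ B ∈ C, A \ B ∈ sigmaDelta C) (ω : Ω) :
    atomOf (sigmaSets C) ω = atomOf C ω := by
  have hCω : ∃ B ∈ C, ω ∈ B := by
    obtain ⟨g, hg, hgu⟩ := hΩ
    have : ω ∈ ⋃ n, g n := hgu ▸ Set.mem_univ ω
    obtain ⟨n, hn⟩ := Set.mem_iUnion.mp this
    exact ⟨g n, hg n, hn⟩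
  have hFω : ∃ B ∈ sigmaSets C, ω ∈ B :=
    ⟨Set.univ, (by exact MeasurableSet.univ : MeasurableSet[MeasurableSpace.generateFrom C] Set.univ), Set.mem_univ ω⟩
  rw [atomOf, atomOf, if_pos hFω, if_pos hCω]
  apply subset_antisymm
  · apply Set.sInter_subset_sInter
    rintro B ⟨hB, hωB⟩
    exact ⟨MeasurableSpace.measurableSet_generateFrom hB, hωB⟩
  · intro x hx
    rintro S ⟨hS, hωS⟩
    exact my_atom_subset C ω (my_sigmaSets_subset_kappa C hΩ hdiff hS) hωS hx
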